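/- arXiv:2412.04967 — 2 statements merged into one kernel-verified Lean document; each statement's English description precedes it below -/
import Mathlib

section
/- For any positive integers k, u with k ≤ n, the two expressions ∑_{i=1}^{u} (-1)^{i-1} (i-1)! · S(u,i) · C(n-i, k-i) and ∑_{j=1}^{k} (-1)^{j-1} j^{u-1} · C(n, k-j) are equal, where S(u,i) is the Stirling number of the second kind. -/
/-- Stirling numbers of the second kind. -/
def stirling2 : ℕ → ℕ → ℕ
  | 0, 0 => 1
  | 0, _ + 1 => 0
  | _ + 1, 0 => 0
  | n + 1, k + 1 => (k + 1) * stirling2 n (k + 1) + stirling2 n k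

lemma stirling2_eq_zero : ∀ n k, n < k → stirling2 n k = 0
  | 0, _+1, _ => rfl
  | n+1, k+1, h => by
    show (k + 1) * stirling2 n (k + 1) + stirling2 n k = 0
    rw [stirling2_eq_zero n (k+1) (by omega), stirling2_eq_zero n k (by omega)]
    simp

lemma sum_Icc_one (u : ℕ) (f : ℕ → ℤ) :
    ∑ i ∈ Finset.Icc 1 u, f i = ∑ i ∈ Finset.range u, f (1+i) := by
  rw [← Finset.Ico_add_one_right_eq_Icc, Finset.sum_Ico_eq_sum_range]; simp

lemma lemA (n : ℕ) (hn : 1 ≤ n) (K : ℕ) :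
    ∑ t ∈ Finset.range (K+1), (-1:ℤ)^t * (n.choose t) = (-1)^K * ((n-1).choose K) := by
  induction K with
  | zero => simp
  | succ K ih =>
    rw [Finset.sum_range_succ, ih]
    obtain ⟨m, rfl⟩ : ∃ m, n = m + 1 := ⟨n-1, by omega⟩
    have hp : (m+1).choose (K+1) = m.choose K + m.choose (K+1) := Nat.choose_succ_succ m K
    simp only [Nat.add_sub_cancel]
    rw [hp]; push_cast; ring

lemma negpow (K t : ℕ) (h : t ≤ K) : (-1:ℤ)^(K-t) = (-1)^K * (-1)^t := by
  have : (-1:ℤ)^K = (-1)^(K-t) * (-1)^t := by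
    rw [← pow_add, Nat.sub_add_cancel h]
  rw [this, mul_assoc, ← pow_add]
  have : (-1:ℤ)^(t+t) = 1 := by rw [← two_mul, pow_mul]; simp
  rw [this, mul_one]

lemma lemB : ∀ (r : ℕ), ∀ (K n : ℕ), r + 1 + K ≤ n →
    ∑ m ∈ Finset.range (K+1), (-1:ℤ)^m * ((r+m).choose m) * (n.choose (K-m))
      = ((n-r-1).choose K) := by
  intro r
  induction r with
  | zero =>
    intro K n hn
    have h1 : ∑ m ∈ Finset.range (K+1), (-1:ℤ)^m * ((0+m).choose m) * (n.choose (K-m))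
        = ∑ m ∈ Finset.range (K+1), (-1:ℤ)^m * (n.choose (K-m)) := by
      apply Finset.sum_congr rfl; intro m _; simp
    rw [h1]
    have h2 : ∑ m ∈ Finset.range (K+1), (-1:ℤ)^m * (n.choose (K-m))
        = ∑ t ∈ Finset.range (K+1), (-1:ℤ)^(K-t) * (n.choose t) := by
      rw [← Finset.sum_range_reflect (fun t => (-1:ℤ)^(K-t) * (n.choose t)) (K+1)]
      apply Finset.sum_congr rfl; intro t ht
      rw [Finset.mem_range] at ht
      have e1 : K + 1 - 1 - t = K - t := by omega
      have e2 : K - (K - t) = t := by omega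
      rw [e1, e2]
    rw [h2]
    have h3 : ∑ t ∈ Finset.range (K+1), (-1:ℤ)^(K-t) * (n.choose t)
        = (-1)^K * ∑ t ∈ Finset.range (K+1), (-1:ℤ)^t * (n.choose t) := by
      rw [Finset.mul_sum]
      apply Finset.sum_congr rfl; intro t ht
      rw [Finset.mem_range] at ht
      rw [negpow K t (by omega)]; ring
    rw [h3, lemA n (by omega) K, ← mul_assoc, ← pow_add, ← two_mul, pow_mul]
    simp [Nat.sub_sub]
  | succ r ihr =>
    intro K
    induction K with
    | zero => intro n hn; simp
    | succ K ihK =>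
      intro n hn
      have hr := ihr (K+1) n (by omega)
      have hk := ihK n (by omega)
      rw [Finset.sum_range_succ'] at hr ⊢
      have step : ∀ m ∈ Finset.range (K+1),
          (-1:ℤ)^(m+1) * ((r+1+(m+1)).choose (m+1)) * (n.choose (K+1-(m+1)))
          = (-1:ℤ)^(m+1) * ((r+(m+1)).choose (m+1)) * (n.choose (K+1-(m+1)))
            - (-1:ℤ)^m * ((r+1+m).choose m) * (n.choose (K-m)) := by
        intro m _
        have hp : (r+1+(m+1)).choose (m+1) = (r+(m+1)).choose m + (r+(m+1)).choose (m+1) := by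
          have : r+1+(m+1) = (r+(m+1)) + 1 := by ring
          rw [this, Nat.choose_succ_succ]
        have e1 : K+1-(m+1) = K - m := by omega
        have e2 : r+(m+1) = r+1+m := by ring
        rw [hp, e1, e2]; push_cast; ring
      rw [Finset.sum_congr rfl step, Finset.sum_sub_distrib]
      have hsub : ∑ m ∈ Finset.range (K+1),
          (-1:ℤ)^m * ((r+1+m).choose m) * (n.choose (K-m)) = ((n-(r+1)-1).choose K) := hk
      rw [hsub]
      have e0 : (r+1+0).choose 0 = 1 := Nat.choose_zero_right _
      have e0' : (r+0).choose 0 = 1 := Nat.choose_zero_right _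
      rw [e0'] at hr
      rw [e0]
      -- pascal on RHS: (n-r-1).choose (K+1) = (n-(r+1)-1).choose K + (n-(r+1)-1).choose (K+1)
      have hp2 : (n-r-1).choose (K+1) = (n-(r+1)-1).choose K + (n-(r+1)-1).choose (K+1) := by
        have h1 : n - r - 1 = (n-(r+1)-1) + 1 := by omega
        rw [h1, Nat.choose_succ_succ]
      rw [hp2] at hr
      push_cast at hr ⊢
      linarith

lemma lemC : ∀ (v p : ℕ),
    (p+1) ^ v = ∑ i ∈ Finset.range (v+1),
      stirling2 (v+1) (i+1) * (Nat.factorial i) * Nat.choose p i := by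
  intro v
  induction v with
  | zero => intro p; simp [stirling2]
  | succ v ih =>
    intro p
    have hpow : (p+1)^(v+1) = (p+1) * ∑ i ∈ Finset.range (v+1),
        stirling2 (v+1) (i+1) * (Nat.factorial i) * Nat.choose p i := by
      rw [← ih, pow_succ, mul_comm]
    rw [hpow, Finset.mul_sum]
    have step : ∀ i ∈ Finset.range (v+1),
        (p+1) * (stirling2 (v+1) (i+1) * (Nat.factorial i) * Nat.choose p i)
        = (i+1) * stirling2 (v+1) (i+1) * (Nat.factorial i) * Nat.choose p i
          + stirling2 (v+1) (i+1) * (Nat.factorial (i+1)) * Nat.choose p (i+1) := by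
      intro i _
      have h1 : (p+1) * Nat.choose p i = (p+1).choose (i+1) * (i+1) :=
        Nat.add_one_mul_choose_eq p i
      have h2 : (p+1).choose (i+1) = p.choose i + p.choose (i+1) := Nat.choose_succ_succ p i
      calc (p+1) * (stirling2 (v+1) (i+1) * (Nat.factorial i) * Nat.choose p i)
          = stirling2 (v+1) (i+1) * (Nat.factorial i) * ((p+1) * Nat.choose p i) := by ring
        _ = stirling2 (v+1) (i+1) * (Nat.factorial i) * ((p.choose i + p.choose (i+1)) * (i+1)) := by
            rw [h1, h2]
        _ = (i+1) * stirling2 (v+1) (i+1) * (Nat.factorial i) * Nat.choose p i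
          + stirling2 (v+1) (i+1) * ((i+1) * Nat.factorial i) * Nat.choose p (i+1) := by ring
        _ = _ := by rw [← Nat.factorial_succ]
    rw [Finset.sum_congr rfl step, Finset.sum_add_distrib]
    -- target side
    have tgt : ∀ i ∈ Finset.range (v+2),
        stirling2 (v+2) (i+1) * (Nat.factorial i) * Nat.choose p i
        = (i+1) * stirling2 (v+1) (i+1) * (Nat.factorial i) * Nat.choose p i
          + stirling2 (v+1) i * (Nat.factorial i) * Nat.choose p i := by
      intro i _
      have : stirling2 (v+2) (i+1) = (i+1) * stirling2 (v+1) (i+1) + stirling2 (v+1) i := rfl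
      rw [this]; ring
    rw [Finset.sum_congr rfl tgt, Finset.sum_add_distrib]
    congr 1
    · -- first sums: extend range (v+1) to (v+2) with zero top term
      conv_rhs => rw [Finset.sum_range_succ]
      rw [stirling2_eq_zero (v+1) (v+1+1) (by omega)]
      simp
    · -- second: peel bottom of RHS
      conv_rhs => rw [Finset.sum_range_succ']
      rw [show stirling2 (v+1) 0 = 0 from rfl]
      simp

lemma key (n k i : ℕ) (hkn : k ≤ n) :
    ∑ j ∈ Finset.range k, (-1:ℤ)^j * (j.choose i) * (n.choose (k-1-j))
      = (-1)^i * (if i+1 ≤ k then ((n-(i+1)).choose (k-(i+1)) : ℤ) else 0) := by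
  by_cases h : i + 1 ≤ k
  · rw [if_pos h]
    obtain ⟨K, rfl⟩ : ∃ K, k = i + (K+1) := ⟨k-i-1, by omega⟩
    rw [Finset.sum_range_add]
    have h1 : ∑ j ∈ Finset.range i, (-1:ℤ)^j * (j.choose i) * (n.choose (i+(K+1)-1-j)) = 0 := by
      apply Finset.sum_eq_zero; intro j hj
      rw [Finset.mem_range] at hj
      rw [Nat.choose_eq_zero_of_lt hj]; simp
    rw [h1, zero_add]
    have h2 : ∀ m ∈ Finset.range (K+1),
        (-1:ℤ)^(i+m) * ((i+m).choose i) * (n.choose (i+(K+1)-1-(i+m)))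
        = (-1:ℤ)^i * ((-1:ℤ)^m * ((i+m).choose m) * (n.choose (K-m))) := by
      intro m _
      have hs : (i+m).choose i = (i+m).choose m := by
        have := Nat.choose_symm (n := i+m) (k := m) (by omega)
        rwa [show i+m-m = i by omega] at this
      have he : i+(K+1)-1-(i+m) = K - m := by omega
      rw [hs, he, pow_add]; ring
    rw [Finset.sum_congr rfl h2, ← Finset.mul_sum, lemB i K n (by omega)]
    have e1 : n-(i+1) = n-i-1 := by omega
    have e2 : i+(K+1)-(i+1) = K := by omega
    rw [e1, e2]
  · rw [if_neg h]
    rw [Finset.sum_eq_zero, mul_zero]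
    intro j hj
    rw [Finset.mem_range] at hj
    rw [Nat.choose_eq_zero_of_lt (by omega)]; simp

theorem stmt_3 (k u n : ℕ) (hk : 1 ≤ k) (hu : 1 ≤ u) (hkn : k ≤ n) :
    ∑ i ∈ Finset.Icc 1 u, (-1 : ℤ) ^ (i - 1) * (Nat.factorial (i - 1) : ℤ) *
        (stirling2 u i : ℤ) * (if i ≤ k then (Nat.choose (n - i) (k - i) : ℤ) else 0)
      = ∑ j ∈ Finset.Icc 1 k, (-1 : ℤ) ^ (j - 1) * (j : ℤ) ^ (u - 1) *
        (Nat.choose n (k - j) : ℤ) := by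
  obtain ⟨v, rfl⟩ : ∃ v, u = v+1 := ⟨u-1, by omega⟩
  rw [sum_Icc_one, sum_Icc_one]
  have hL : ∀ i ∈ Finset.range (v+1),
      (-1:ℤ)^((1+i)-1) * (Nat.factorial ((1+i)-1) : ℤ) * (stirling2 (v+1) (1+i) : ℤ) *
        (if 1+i ≤ k then (Nat.choose (n-(1+i)) (k-(1+i)) : ℤ) else 0)
      = (stirling2 (v+1) (i+1) : ℤ) * (Nat.factorial i : ℤ) *
        ((-1:ℤ)^i * (if i+1 ≤ k then ((n-(i+1)).choose (k-(i+1)) : ℤ) else 0)) := by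
    intro i _
    have e : (1+i)-1 = i := by omega
    rw [e, show 1+i = i+1 by omega]
    ring
  rw [Finset.sum_congr rfl hL]
  have hR : ∀ j ∈ Finset.range k,
      (-1:ℤ)^((1+j)-1) * ((1+j : ℕ) : ℤ)^((v+1)-1) * (Nat.choose n (k-(1+j)) : ℤ)
      = ∑ i ∈ Finset.range (v+1),
          (stirling2 (v+1) (i+1) : ℤ) * (Nat.factorial i : ℤ) *
          ((-1:ℤ)^j * (j.choose i : ℤ) * (n.choose (k-1-j) : ℤ)) := by
    intro j _
    have e1 : (1+j)-1 = j := by omega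
    have e2 : (v+1)-1 = v := by omega
    have e3 : k-(1+j) = k-1-j := by omega
    rw [e1, e2, e3]
    have hc := lemC v j
    have hc' : (((j+1:ℕ):ℤ))^v = ∑ i ∈ Finset.range (v+1),
        (stirling2 (v+1) (i+1) : ℤ) * (Nat.factorial i : ℤ) * (j.choose i : ℤ) := by
      rw [show (((j+1:ℕ):ℤ))^v = (((j+1)^v : ℕ) : ℤ) by push_cast; ring, hc]
      push_cast; ring
    rw [show ((1+j:ℕ):ℤ) = ((j+1:ℕ):ℤ) by push_cast; ring, hc', Finset.mul_sum,
      Finset.sum_mul]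
    apply Finset.sum_congr rfl; intro i _; ring
  rw [Finset.sum_congr rfl hR, Finset.sum_comm]
  apply Finset.sum_congr rfl
  intro i _
  rw [← Finset.mul_sum, key n k i hkn]
end

section
/- Fix k ≥ 2 and u ≥ 1. If n is a positive integer such that the Moser polynomial ∑_{j=1}^{k} (-1)^{j-1} j^{u-1} C(n, k-j) equals 0, then n divides (k−1)! · k^{u-1}. -/
theorem stmt_8 (k u n : ℕ) (hk : 2 ≤ k) (hu : 1 ≤ u) (hn : 1 ≤ n)
    (h : ∑ j ∈ Finset.Icc 1 k, (-1 : ℤ) ^ (j - 1) * (j : ℤ) ^ (u - 1) *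
        (Nat.choose n (k - j) : ℤ) = 0) :
    n ∣ Nat.factorial (k - 1) * k ^ (u - 1) := by
  have hk1 : k - 1 + 1 = k := by omega
  have h2 : ∑ j ∈ Finset.Icc 1 k, (-1 : ℤ) ^ (j - 1) * (j : ℤ) ^ (u - 1) *
      (Nat.choose n (k - j) : ℤ) * ((k-1).factorial : ℤ) = 0 := by
    rw [← Finset.sum_mul, h, zero_mul]
  have hsplit : ∑ j ∈ Finset.Icc 1 k, (-1 : ℤ) ^ (j - 1) * (j : ℤ) ^ (u - 1) *
      (Nat.choose n (k - j) : ℤ) * ((k-1).factorial : ℤ)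
      = (∑ j ∈ Finset.Icc 1 (k-1), (-1 : ℤ) ^ (j - 1) * (j : ℤ) ^ (u - 1) *
        (Nat.choose n (k - j) : ℤ) * ((k-1).factorial : ℤ))
      + (-1 : ℤ) ^ (k - 1) * (k : ℤ) ^ (u - 1) *
        (Nat.choose n (k - k) : ℤ) * ((k-1).factorial : ℤ) := by
    rw [← hk1, Finset.sum_Icc_succ_top (by omega)]
    simp [hk1]
  have hdvd : ∀ j ∈ Finset.Icc 1 (k-1), (n:ℤ) ∣ (-1 : ℤ) ^ (j - 1) * (j : ℤ) ^ (u - 1) *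
      (Nat.choose n (k - j) : ℤ) * ((k-1).factorial : ℤ) := by
    intro j hj
    simp only [Finset.mem_Icc] at hj
    have h1 : n ∣ Nat.choose n (k-j) * (k-j) := by
      have key := Nat.add_one_mul_choose_eq (n-1) (k-j-1)
      have e1 : n - 1 + 1 = n := by omega
      have e2 : k - j - 1 + 1 = k-j := by omega
      rw [e1, e2] at key
      exact ⟨_, key.symm⟩
    have h3 : n ∣ Nat.choose n (k-j) * (k-1).factorial :=
      h1.trans (Nat.mul_dvd_mul_left _ (Nat.dvd_factorial (by omega) (by omega)))
    have h4 : (n:ℤ) ∣ (Nat.choose n (k-j) : ℤ) * ((k-1).factorial : ℤ) := by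
      exact_mod_cast Int.natCast_dvd_natCast.mpr h3
    have := h4.mul_left ((-1 : ℤ) ^ (j - 1) * (j : ℤ) ^ (u - 1))
    rwa [← mul_assoc] at this
  have hsum : (n:ℤ) ∣ ∑ j ∈ Finset.Icc 1 (k-1), (-1 : ℤ) ^ (j - 1) * (j : ℤ) ^ (u - 1) *
      (Nat.choose n (k - j) : ℤ) * ((k-1).factorial : ℤ) := Finset.dvd_sum hdvd
  have hterm : (n:ℤ) ∣ (-1 : ℤ) ^ (k - 1) * (k : ℤ) ^ (u - 1) *
      (Nat.choose n (k - k) : ℤ) * ((k-1).factorial : ℤ) := by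
    have : (-1 : ℤ) ^ (k - 1) * (k : ℤ) ^ (u - 1) *
        (Nat.choose n (k - k) : ℤ) * ((k-1).factorial : ℤ)
        = (∑ j ∈ Finset.Icc 1 k, (-1 : ℤ) ^ (j - 1) * (j : ℤ) ^ (u - 1) *
          (Nat.choose n (k - j) : ℤ) * ((k-1).factorial : ℤ))
        - ∑ j ∈ Finset.Icc 1 (k-1), (-1 : ℤ) ^ (j - 1) * (j : ℤ) ^ (u - 1) *
          (Nat.choose n (k - j) : ℤ) * ((k-1).factorial : ℤ) := by
      rw [hsplit]; ring
    rw [this, h2, zero_sub]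
    exact (dvd_neg).mpr hsum
  have hterm2 : (n:ℤ) ∣ ((k-1).factorial * k ^ (u-1) : ℕ) := by
    simp only [Nat.sub_self, Nat.choose_zero_right, Nat.cast_one, mul_one] at hterm
    push_cast
    rcases Nat.even_or_odd (k-1) with he | he
    · rw [Even.neg_one_pow he, one_mul] at hterm
      rwa [mul_comm ((k:ℤ) ^ (u-1))] at hterm
    · rw [Odd.neg_one_pow he, neg_mul, neg_mul, dvd_neg, one_mul] at hterm
      rwa [mul_comm ((k:ℤ) ^ (u-1))] at hterm
  exact_mod_cast hterm2
end
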